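/- Let u : ℝ^m → [0,1] be a fuzzy set, t ∈ ℝ^m, r > 0, and let ϖ be a countable dense subset of the unit sphere S^{m−1} ⊆ ℝ^m. Then ⋃_{e ∈ S^{m−1}} D_{u,t,r,e} = ⋃_{e ∈ ϖ} D_{u,t,r,e}. -/

import Mathlib

open Set Metric

/-- `S_{u,t,r}(e, α)`: the sup of `⟨e, x - t⟩` over `[u]_α ∩ closedBall t r`,
with value `⊥ = -∞` when this set is empty (`sSup ∅ = ⊥` in `EReal`). -/
noncomputable def Sfun {m : ℕ} (u : EuclideanSpace ℝ (Fin m) → ℝ)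
    (t : EuclideanSpace ℝ (Fin m)) (r : ℝ)
    (e : EuclideanSpace ℝ (Fin m)) (α : ℝ) : EReal :=
  sSup ((fun x => ((inner ℝ e (x - t) : ℝ) : EReal)) ''
    ({x | α ≤ u x} ∩ closedBall t r))

/-- The set `D_{u,t,r,e}` of discontinuous points `α ∈ (0,1)` of `S_{u,t,r}(e, ·)`:
(i) `S_{u,t,r}(e, α) ∈ ℝ` and (ii) either `S_{u,t,r}(e, β) = -∞` for all `β > α`, or
`-∞ < lim_{β→α+} S = ⨆_{β > α} S < lim_{β→α-} S = ⨅_{β < α} S`. -/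
noncomputable def Dset {m : ℕ} (u : EuclideanSpace ℝ (Fin m) → ℝ)
    (t : EuclideanSpace ℝ (Fin m)) (r : ℝ)
    (e : EuclideanSpace ℝ (Fin m)) : Set ℝ :=
  {α | α ∈ Ioo (0:ℝ) 1 ∧ Sfun u t r e α ≠ ⊥ ∧ Sfun u t r e α ≠ ⊤ ∧
    ((∀ β ∈ Ioc α 1, Sfun u t r e β = ⊥) ∨
      ((⊥ < ⨆ β ∈ Ioc α 1, Sfun u t r e β) ∧
        ((⨆ β ∈ Ioc α 1, Sfun u t r e β) < ⨅ β ∈ Ico (0:ℝ) α, Sfun u t r e β)))}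

section Aux

variable {m : ℕ} (u : EuclideanSpace ℝ (Fin m) → ℝ) (t : EuclideanSpace ℝ (Fin m)) (r : ℝ)

/-- `Sfun` is `⊥` iff the underlying set is empty; in particular this is independent of `e`. -/
lemma Sfun_eq_bot_iff (e : EuclideanSpace ℝ (Fin m)) (β : ℝ) :
    Sfun u t r e β = ⊥ ↔ ({x | β ≤ u x} ∩ closedBall t r) = ∅ := by
  unfold Sfun
  constructor
  · intro h
    by_contra hne
    obtain ⟨x, hx⟩ := nonempty_iff_ne_empty.mpr hne
    have h2 := le_sSup (mem_image_of_mem (fun x => ((inner ℝ e (x - t) : ℝ) : EReal)) hx)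
    rw [h, le_bot_iff] at h2
    exact EReal.coe_ne_bot _ h2
  · intro h
    rw [h, image_empty, sSup_empty]

lemma Sfun_le_coe (hr : 0 ≤ r) {e : EuclideanSpace ℝ (Fin m)} (he : ‖e‖ = 1) (β : ℝ) :
    Sfun u t r e β ≤ (r : EReal) := by
  apply sSup_le
  rintro z ⟨x, hx, rfl⟩
  rw [EReal.coe_le_coe_iff]
  calc (inner ℝ e (x - t) : ℝ) ≤ ‖e‖ * ‖x - t‖ := real_inner_le_norm _ _
    _ = ‖x - t‖ := by rw [he, one_mul]
    _ ≤ r := by rw [← dist_eq_norm]; exact mem_closedBall.mp hx.2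

lemma Sfun_ne_top (hr : 0 ≤ r) {e : EuclideanSpace ℝ (Fin m)} (he : ‖e‖ = 1) (β : ℝ) :
    Sfun u t r e β ≠ ⊤ :=
  ((Sfun_le_coe u t r hr he β).trans_lt (EReal.coe_lt_top r)).ne

/-- Lipschitz-type estimate for `Sfun` in `e`. -/
lemma Sfun_lip (e e' : EuclideanSpace ℝ (Fin m)) (β : ℝ) :
    Sfun u t r e β ≤ Sfun u t r e' β + ((‖e - e'‖ * r : ℝ) : EReal) := by
  apply sSup_le
  rintro z ⟨x, hx, rfl⟩
  have h2 : (inner ℝ (e - e') (x - t) : ℝ) ≤ ‖e - e'‖ * r := by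
    calc (inner ℝ (e - e') (x - t) : ℝ) ≤ ‖e - e'‖ * ‖x - t‖ := real_inner_le_norm _ _
      _ ≤ ‖e - e'‖ * r := by
          apply mul_le_mul_of_nonneg_left _ (norm_nonneg _)
          rw [← dist_eq_norm]; exact mem_closedBall.mp hx.2
  have h3 : (inner ℝ (e - e') (x - t) : ℝ) = inner ℝ e (x - t) - inner ℝ e' (x - t) :=
    inner_sub_left _ _ _
  have h1 : (inner ℝ e (x - t) : ℝ) ≤ inner ℝ e' (x - t) + ‖e - e'‖ * r := by linarith
  calc ((inner ℝ e (x - t) : ℝ) : EReal)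
      ≤ ((inner ℝ e' (x - t) + ‖e - e'‖ * r : ℝ) : EReal) := EReal.coe_le_coe_iff.mpr h1
    _ = ((inner ℝ e' (x - t) : ℝ) : EReal) + ((‖e - e'‖ * r : ℝ) : EReal) := EReal.coe_add _ _
    _ ≤ Sfun u t r e' β + ((‖e - e'‖ * r : ℝ) : EReal) := by
        have hmem : ((inner ℝ e' (x - t) : ℝ) : EReal) ≤ Sfun u t r e' β :=
          le_sSup (mem_image_of_mem _ hx)
        exact add_le_add_left hmem _

end Aux

/-- If `ϖ` is a countable dense subset of the unit sphere `S^{m-1}`, then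
`⋃_{e ∈ S^{m-1}} D_{u,t,r,e} = ⋃_{e ∈ ϖ} D_{u,t,r,e}`. -/
theorem union_Dset_eq_union_countable_dense {m : ℕ}
    (u : EuclideanSpace ℝ (Fin m) → ℝ) (hu : ∀ x, u x ∈ Icc (0:ℝ) 1)
    (t : EuclideanSpace ℝ (Fin m)) (r : ℝ) (hr : 0 < r)
    (ϖ : Set (EuclideanSpace ℝ (Fin m)))
    (hϖsub : ϖ ⊆ sphere (0 : EuclideanSpace ℝ (Fin m)) 1)
    (hϖc : ϖ.Countable)
    (hϖd : sphere (0 : EuclideanSpace ℝ (Fin m)) 1 ⊆ closure ϖ) :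
    (⋃ e ∈ sphere (0 : EuclideanSpace ℝ (Fin m)) 1, Dset u t r e) =
      ⋃ e ∈ ϖ, Dset u t r e := by
  apply Subset.antisymm
  · intro α hα
    simp only [mem_iUnion, exists_prop] at hα ⊢
    obtain ⟨e, he, hIoo, hbot, htop, hcase⟩ := hα
    have he1 : ‖e‖ = 1 := mem_sphere_zero_iff_norm.mp he
    have hAα : ({x | α ≤ u x} ∩ closedBall t r).Nonempty :=
      nonempty_iff_ne_empty.mpr (fun h => hbot ((Sfun_eq_bot_iff u t r e α).mpr h))
    rcases hcase with h1 | ⟨hgbot, hgf⟩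
    · -- Case 1: all β > α give ⊥, independent of direction
      obtain ⟨e', he'⟩ : ϖ.Nonempty := closure_nonempty_iff.mp ⟨e, hϖd he⟩
      have he'1 : ‖e'‖ = 1 := mem_sphere_zero_iff_norm.mp (hϖsub he')
      refine ⟨e', he', hIoo, ?_, Sfun_ne_top u t r hr.le he'1 α, Or.inl ?_⟩
      · exact fun h => (nonempty_iff_ne_empty.mp hAα) ((Sfun_eq_bot_iff u t r e' α).mp h)
      · intro β hβ
        exact (Sfun_eq_bot_iff u t r e' β).mpr ((Sfun_eq_bot_iff u t r e β).mp (h1 β hβ))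
    · -- Case 2
      set g : EReal := ⨆ β ∈ Ioc α 1, Sfun u t r e β with hgdef
      set f : EReal := ⨅ β ∈ Ico (0:ℝ) α, Sfun u t r e β with hfdef
      have hg_ne_top : g ≠ ⊤ := by
        refine ((iSup₂_le fun β _ => Sfun_le_coe u t r hr.le he1 β).trans_lt
          (EReal.coe_lt_top r)).ne
      have hg_ne_bot : g ≠ ⊥ := hgbot.ne'
      have hf_ne_bot : f ≠ ⊥ := (hgbot.trans hgf).ne'
      have hf_ne_top : f ≠ ⊤ := by
        have h0 : (0:ℝ) ∈ Ico (0:ℝ) α := ⟨le_refl 0, hIoo.1⟩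
        exact ((iInf₂_le (0:ℝ) h0).trans_lt
          ((Sfun_le_coe u t r hr.le he1 0).trans_lt (EReal.coe_lt_top r))).ne
      set G : ℝ := g.toReal with hGdef
      set F : ℝ := f.toReal with hFdef
      have hG : (G : EReal) = g := EReal.coe_toReal hg_ne_top hg_ne_bot
      have hF : (F : EReal) = f := EReal.coe_toReal hf_ne_top hf_ne_bot
      have hGF : G < F := by
        rw [← EReal.coe_lt_coe_iff, hG, hF]; exact hgf
      -- pick e' close to e
      have hεpos : 0 < (F - G) / (2 * r) := div_pos (by linarith) (by linarith)
      obtain ⟨e', he'ϖ, hde⟩ := Metric.mem_closure_iff.mp (hϖd he) _ hεpos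
      have he'1 : ‖e'‖ = 1 := mem_sphere_zero_iff_norm.mp (hϖsub he'ϖ)
      set c : ℝ := ‖e - e'‖ * r with hcdef
      have hc0 : 0 ≤ c := mul_nonneg (norm_nonneg _) hr.le
      have hc : c < (F - G) / 2 := by
        have : ‖e - e'‖ < (F - G) / (2 * r) := by rwa [← dist_eq_norm]
        calc c < ((F - G) / (2 * r)) * r := by
              exact mul_lt_mul_of_pos_right this hr
          _ = (F - G) / 2 := by field_simp
      have hc' : ‖e' - e‖ * r = c := by rw [norm_sub_rev]
      -- key1 : sup for e' is at most G + c
      have key1 : (⨆ β ∈ Ioc α 1, Sfun u t r e' β) ≤ ((G + c : ℝ) : EReal) := by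
        apply iSup₂_le
        intro β hβ
        by_cases hA : ({x | β ≤ u x} ∩ closedBall t r) = ∅
        · rw [(Sfun_eq_bot_iff u t r e' β).mpr hA]; exact bot_le
        · have hne_bot : Sfun u t r e β ≠ ⊥ :=
            fun h => hA ((Sfun_eq_bot_iff u t r e β).mp h)
          have hne_top : Sfun u t r e β ≠ ⊤ := Sfun_ne_top u t r hr.le he1 β
          set s : ℝ := (Sfun u t r e β).toReal with hsdef
          have hs : (s : EReal) = Sfun u t r e β := EReal.coe_toReal hne_top hne_bot
          have hsG : s ≤ G := by
            rw [← EReal.coe_le_coe_iff, hs, hG]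
            exact le_iSup₂ (f := fun β _ => Sfun u t r e β) β hβ
          calc Sfun u t r e' β ≤ Sfun u t r e β + ((‖e' - e‖ * r : ℝ) : EReal) :=
                Sfun_lip u t r e' e β
            _ = ((s + c : ℝ) : EReal) := by rw [hc', ← hs, ← EReal.coe_add]
            _ ≤ ((G + c : ℝ) : EReal) := EReal.coe_le_coe_iff.mpr (by linarith)
      -- key2 : inf for e' is at least F - c
      have key2 : ((F - c : ℝ) : EReal) ≤ ⨅ β ∈ Ico (0:ℝ) α, Sfun u t r e' β := by
        apply le_iInf₂
        intro β hβ
        have hsub : ({x | α ≤ u x} ∩ closedBall t r) ⊆ ({x | β ≤ u x} ∩ closedBall t r) :=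
          inter_subset_inter_left _ (fun x hx => le_trans hβ.2.le hx)
        have hAβ : ({x | β ≤ u x} ∩ closedBall t r).Nonempty := hAα.mono hsub
        have hne_bot' : Sfun u t r e' β ≠ ⊥ :=
          fun h => (nonempty_iff_ne_empty.mp hAβ) ((Sfun_eq_bot_iff u t r e' β).mp h)
        have hne_top' : Sfun u t r e' β ≠ ⊤ := Sfun_ne_top u t r hr.le he'1 β
        set s' : ℝ := (Sfun u t r e' β).toReal with hs'def
        have hs' : (s' : EReal) = Sfun u t r e' β := EReal.coe_toReal hne_top' hne_bot'
        have hFs : (F : EReal) ≤ ((s' + c : ℝ) : EReal) := by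
          calc (F : EReal) = f := hF
            _ ≤ Sfun u t r e β := iInf₂_le β hβ
            _ ≤ Sfun u t r e' β + ((‖e - e'‖ * r : ℝ) : EReal) := Sfun_lip u t r e e' β
            _ = ((s' + c : ℝ) : EReal) := by rw [← hs', ← EReal.coe_add]
        have : F ≤ s' + c := EReal.coe_le_coe_iff.mp hFs
        rw [← hs']
        exact EReal.coe_le_coe_iff.mpr (by linarith)
      -- find β with nonempty cut to show the sup for e' is > ⊥
      have hg'bot : ⊥ < ⨆ β ∈ Ioc α 1, Sfun u t r e' β := by
        by_contra h
        rw [not_bot_lt_iff, iSup₂_eq_bot] at h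
        apply hg_ne_bot
        rw [hgdef, iSup₂_eq_bot]
        intro β hβ
        exact (Sfun_eq_bot_iff u t r e β).mpr ((Sfun_eq_bot_iff u t r e' β).mp (h β hβ))
      refine ⟨e', he'ϖ, hIoo, ?_, Sfun_ne_top u t r hr.le he'1 α, Or.inr ⟨hg'bot, ?_⟩⟩
      · exact fun h => (nonempty_iff_ne_empty.mp hAα) ((Sfun_eq_bot_iff u t r e' α).mp h)
      · calc (⨆ β ∈ Ioc α 1, Sfun u t r e' β) ≤ ((G + c : ℝ) : EReal) := key1
          _ < ((F - c : ℝ) : EReal) := EReal.coe_lt_coe_iff.mpr (by linarith)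
          _ ≤ ⨅ β ∈ Ico (0:ℝ) α, Sfun u t r e' β := key2
  · refine iUnion₂_subset fun e he => ?_
    exact subset_iUnion₂ (s := fun e (_ : e ∈ sphere (0:EuclideanSpace ℝ (Fin m)) 1) =>
      Dset u t r e) e (hϖsub he)
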